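/- Let R ≅ R_1 × R_2 × ⋯ × R_n (n ≥ 3) be a finite commutative ring with unity, where R_1 and R_2 are local rings neither of which has characteristic 2. Then the four vertices (0,0,…,0), (1,0,…,0), (−1,1,0,…,0), (1,−1,0,…,0) induce a subgraph of G_Id(R) isomorphic to P_4; in particular G_Id(R) is not a cograph. -/

import Mathlib

/-- The idempotent graph of a ring: vertices are ring elements, distinct `x, y`
adjacent iff `x + y` is idempotent. -/
def idemGraph (R : Type*) [Ring R] : SimpleGraph R where
  Adj x y := x ≠ y ∧ IsIdempotentElem (x + y)
  symm := ⟨fun x y h => ⟨h.1.symm, by rw [add_comm]; exact h.2⟩⟩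
  loopless := ⟨fun x h => h.1 rfl⟩

/-- The set of idempotent elements of a ring. -/
def idemSet (R : Type*) [Ring R] : Set R := {e : R | IsIdempotentElem e}

/-- A split graph: vertices partition into a clique and an independent set. -/
def IsSplitGraph {V : Type*} (G : SimpleGraph V) : Prop :=
  ∃ C I : Set V, Disjoint C I ∧ C ∪ I = Set.univ ∧ G.IsClique C ∧
    I.Pairwise (fun a b => ¬ G.Adj a b)

/-- A cograph: no induced path on four vertices. -/
def IsCograph {V : Type*} (G : SimpleGraph V) : Prop :=
  ¬ ∃ a b c d : V, a ≠ c ∧ a ≠ d ∧ b ≠ d ∧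
    G.Adj a b ∧ G.Adj b c ∧ G.Adj c d ∧ ¬ G.Adj a c ∧ ¬ G.Adj a d ∧ ¬ G.Adj b d

lemma neg_one_not_idem {S : Type*} [CommRing S] (h : (2 : S) ≠ 0) :
    ¬ IsIdempotentElem (-1 : S) := by
  intro h'
  have h1 : (-1 : S) * (-1) = -1 := h'
  apply h
  linear_combination h1

theorem stmt9 {n : ℕ} (hn : 3 ≤ n) (R : Fin n → Type*) [∀ i, CommRing (R i)]
    [∀ i, IsLocalRing (R i)] [∀ i, Fintype (R i)]
    (h1 : (2 : R ⟨0, by omega⟩) ≠ 0) (h2 : (2 : R ⟨1, by omega⟩) ≠ 0) :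
    (let G := idemGraph (∀ i, R i)
     let i0 : Fin n := ⟨0, by omega⟩
     let i1 : Fin n := ⟨1, by omega⟩
     let a : ∀ i, R i := 0
     let b := Pi.single i0 (1 : R i0)
     let c := Pi.single i0 (-1 : R i0) + Pi.single i1 (1 : R i1)
     let d := Pi.single i0 (1 : R i0) + Pi.single i1 (-1 : R i1)
     a ≠ c ∧ a ≠ d ∧ b ≠ d ∧
     G.Adj a b ∧ G.Adj b c ∧ G.Adj c d ∧ ¬ G.Adj a c ∧ ¬ G.Adj a d ∧ ¬ G.Adj b d) ∧
    ¬ IsCograph (idemGraph (∀ i, R i)) := by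
  set G := idemGraph (∀ i, R i) with hG
  set i0 : Fin n := ⟨0, by omega⟩ with hi0
  set i1 : Fin n := ⟨1, by omega⟩ with hi1
  set a : ∀ i, R i := 0 with ha
  set b := Pi.single i0 (1 : R i0) with hb
  set c := Pi.single i0 (-1 : R i0) + Pi.single i1 (1 : R i1) with hc
  set d := Pi.single i0 (1 : R i0) + Pi.single i1 (-1 : R i1) with hd
  have hne : i0 ≠ i1 := by simp [hi0, hi1, Fin.ext_iff]
  have h10 : (1 : R i0) ≠ 0 := one_ne_zero
  have h11 : (1 : R i1) ≠ 0 := one_ne_zero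
  -- componentwise values
  have hbv0 : b i0 = 1 := Pi.single_eq_same i0 1
  have hbv1 : b i1 = 0 := Pi.single_eq_of_ne hne.symm 1
  have hcv0 : c i0 = -1 := by simp [hc, hne, hne.symm]
  have hcv1 : c i1 = 1 := by simp [hc, hne, hne.symm]
  have hdv0 : d i0 = 1 := by simp [hd, hne, hne.symm]
  have hdv1 : d i1 = -1 := by simp [hd, hne, hne.symm]
  have pi_idem : ∀ x : ∀ i, R i, (∀ i, (x i) * (x i) = x i) → IsIdempotentElem x :=
    fun x h => funext h
  have pi_nidem : ∀ (x : ∀ i, R i) (i : Fin n),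
      ¬ IsIdempotentElem (x i) → ¬ IsIdempotentElem x := by
    intro x i h h'
    exact h (congrFun h' i)
  have hn1i0 := neg_one_not_idem h1
  have hn1i1 := neg_one_not_idem h2
  have key : a ≠ c ∧ a ≠ d ∧ b ≠ d ∧
      G.Adj a b ∧ G.Adj b c ∧ G.Adj c d ∧ ¬ G.Adj a c ∧ ¬ G.Adj a d ∧ ¬ G.Adj b d := by
    refine ⟨?_, ?_, ?_, ?_, ?_, ?_, ?_, ?_, ?_⟩
    · intro h
      have h' : (0 : R i0) = -1 := (congrFun h i0).trans hcv0
      exact h1 (by linear_combination 2 * h')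
    · intro h
      have := congrFun h i0
      rw [hdv0] at this
      exact h10 this.symm
    · intro h
      have h' : (0 : R i1) = -1 := hbv1 ▸ hdv1 ▸ congrFun h i1
      exact h2 (by linear_combination 2 * h')
    · refine ⟨?_, ?_⟩
      · intro h
        have := congrFun h i0
        rw [hbv0] at this
        exact h10 this.symm
      · refine pi_idem _ fun i => ?_
        by_cases hi : i = i0
        · subst hi; simp [ha, hbv0]
        · simp [ha, hb, Pi.single_eq_of_ne (hi)]
    · refine ⟨?_, ?_⟩
      · intro h
        have := congrFun h i1
        rw [hbv1, hcv1] at this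
        exact h11 this.symm
      · refine pi_idem _ fun i => ?_
        by_cases hi : i = i0
        · subst hi; rw [Pi.add_apply, hbv0, hcv0]; ring
        · by_cases hj : i = i1
          · subst hj; rw [Pi.add_apply, hbv1, hcv1]; ring
          · simp [hb, hc, Pi.single_eq_of_ne (hi), Pi.single_eq_of_ne (hj)]
    · refine ⟨?_, ?_⟩
      · intro h
        have := congrFun h i0
        rw [hcv0, hdv0] at this
        exact h1 (by linear_combination -this)
      · refine pi_idem _ fun i => ?_
        by_cases hi : i = i0
        · subst hi; rw [Pi.add_apply, hcv0, hdv0]; ring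
        · by_cases hj : i = i1
          · subst hj; rw [Pi.add_apply, hcv1, hdv1]; ring
          · simp [hc, hd, Pi.single_eq_of_ne (hi), Pi.single_eq_of_ne (hj)]
    · rintro ⟨-, hI⟩
      refine pi_nidem _ i0 ?_ hI
      rw [Pi.add_apply]
      rw [show a i0 = 0 from rfl, hcv0, zero_add]
      exact hn1i0
    · rintro ⟨-, hI⟩
      refine pi_nidem _ i1 ?_ hI
      rw [Pi.add_apply]
      rw [show a i1 = 0 from rfl, hdv1, zero_add]
      exact hn1i1
    · rintro ⟨-, hI⟩
      refine pi_nidem _ i1 ?_ hI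
      rw [Pi.add_apply, hbv1, hdv1, zero_add]
      exact hn1i1
  exact ⟨key, fun hcog => hcog ⟨a, b, c, d, key⟩⟩
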